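/- With the same setup of a 2-step isotropic flag with dimension sequence (a_1,a_2,a_3,a_4,a_5), the number of isotropic lines L with L ⊂ F_4 and L ⊄ F_3 is q^{a_1+a_2+a_3-1}·(q^{a_4}-1)/(q-1). -/

import Mathlib

set_option maxHeartbeats 1000000
set_option synthInstance.maxHeartbeats 400000


/-- The hyperbolic symmetric bilinear form `⟨x,y⟩ = ∑ i, x i * y (rev i)` on `K^{2r}`. -/
def formJ {K : Type*} [CommRing K] {m : ℕ} (x y : Fin m → K) : K :=
  ∑ i, x i * y i.rev

lemma formJ_add_left {K : Type*} [CommRing K] {m : ℕ} (x x' y : Fin m → K) :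
    formJ (x + x') y = formJ x y + formJ x' y := by
  simp [formJ, add_mul, Finset.sum_add_distrib]

lemma formJ_smul_left {K : Type*} [CommRing K] {m : ℕ} (c : K) (x y : Fin m → K) :
    formJ (c • x) y = c * formJ x y := by
  simp [formJ, Finset.mul_sum, mul_assoc]

lemma formJ_comm {K : Type*} [CommRing K] {m : ℕ} (x y : Fin m → K) :
    formJ x y = formJ y x := by
  unfold formJ
  rw [← Equiv.sum_comp (Fin.revPerm) (fun i => x i * y i.rev)]
  simp [mul_comm]

lemma formJ_add_right {K : Type*} [CommRing K] {m : ℕ} (x y y' : Fin m → K) :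
    formJ x (y + y') = formJ x y + formJ x y' := by
  rw [formJ_comm, formJ_add_left, formJ_comm y x, formJ_comm y' x]

lemma formJ_smul_right {K : Type*} [CommRing K] {m : ℕ} (c : K) (x y : Fin m → K) :
    formJ x (c • y) = c * formJ x y := by
  rw [formJ_comm, formJ_smul_left, formJ_comm]

lemma formJ_quad {K : Type*} [CommRing K] {m : ℕ} (a u : Fin m → K) (t : K) :
    formJ (a + t • u) (a + t • u)
      = formJ a a + t * (formJ a u + formJ u a) + t * t * formJ u u := by
  rw [formJ_add_left, formJ_add_right, formJ_add_right, formJ_smul_left,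
    formJ_smul_right, formJ_smul_left, formJ_smul_right]
  ring

lemma fiber_card {K : Type*} [Field K] [Fintype K] {m : ℕ} (htwo : (2 : K) ≠ 0)
    (F₃ : Submodule K (Fin m → K)) (v₀ u : Fin m → K)
    (huF : u ∈ F₃) (hu3 : ∀ w ∈ F₃, formJ w u = 0) (huu : formJ u u = 0)
    (hvu : formJ v₀ u ≠ 0) :
    Nat.card {w : F₃ // formJ (v₀ + (w : Fin m → K)) (v₀ + (w : Fin m → K)) = 0}
        * Fintype.card K = Nat.card F₃ := by
  classical
  set e : K := 2 * formJ v₀ u with he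
  have he0 : e ≠ 0 := mul_ne_zero htwo hvu
  set θ : F₃ → K := fun w => formJ (v₀ + (w : Fin m → K)) (v₀ + (w : Fin m → K)) with hθ
  have key : ∀ (w : F₃) (t : K), θ (w + t • ⟨u, huF⟩) = θ w + t * e := by
    intro w t
    have hco : v₀ + ((w + t • (⟨u, huF⟩ : F₃)) : F₃).val = (v₀ + (w : Fin m → K)) + t • u := by
      push_cast; abel
    simp only [hθ, hco, formJ_quad]
    have h1 : formJ (v₀ + (w : Fin m → K)) u = formJ v₀ u := by
      rw [formJ_add_left, hu3 _ w.2, add_zero]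
    have h2 : formJ u (v₀ + (w : Fin m → K)) = formJ v₀ u := by
      rw [formJ_comm]; exact h1
    rw [h1, h2, huu]; ring
  have fib : ∀ c : K, Nat.card {w : F₃ // θ w = c} = Nat.card {w : F₃ // θ w = 0} := by
    intro c
    refine Nat.card_eq_of_bijective
      (fun w => ⟨w.1 + ((-c) / e) • ⟨u, huF⟩, by
        rw [key, w.2, div_mul_cancel₀ _ he0]; ring⟩) ⟨?_, ?_⟩
    · intro a b hab
      have h := congrArg Subtype.val hab
      simp only at h
      exact Subtype.ext (add_right_cancel h)
    · rintro ⟨w, hw⟩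
      refine ⟨⟨w - ((-c) / e) • ⟨u, huF⟩, ?_⟩, Subtype.ext (by simp)⟩
      have habel : w - ((-c)/e) • (⟨u, huF⟩ : F₃) + ((-c)/e) • (⟨u, huF⟩ : F₃) = w := by abel
      have h2 := key (w - ((-c)/e) • ⟨u, huF⟩) ((-c)/e)
      rw [habel, hw, div_mul_cancel₀ _ he0] at h2
      linear_combination -h2
  have : Fintype F₃ := Fintype.ofFinite _
  have hsig : Fintype.card F₃ = ∑ c : K, Fintype.card {w : F₃ // θ w = c} := by
    rw [← Fintype.card_sigma]
    exact (Fintype.card_congr (Equiv.sigmaFiberEquiv θ)).symm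
  have hsig' : Nat.card F₃ = ∑ c : K, Nat.card {w : F₃ // θ w = c} := by
    simpa [Nat.card_eq_fintype_card] using hsig
  rw [hsig']
  simp only [fib]
  rw [Finset.sum_const, Finset.card_univ, smul_eq_mul, mul_comm]

lemma lines_mul (K : Type*) [Field K] [Fintype K] {m : ℕ}
    (F₃ F₄ : Submodule K (Fin m → K)) (h03 : (0 : Fin m → K) ∈ F₃) :
    Nat.card {L : Submodule K (Fin m → K) //
        Module.finrank K L = 1 ∧ (∀ x ∈ L, formJ x x = 0) ∧ L ≤ F₄ ∧ ¬L ≤ F₃}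
      * (Fintype.card K - 1)
    = Nat.card {v : Fin m → K // v ∈ F₄ ∧ v ∉ F₃ ∧ formJ v v = 0} := by
  classical
  set P : Submodule K (Fin m → K) → Prop := fun L =>
    Module.finrank K L = 1 ∧ (∀ x ∈ L, formJ x x = 0) ∧ L ≤ F₄ ∧ ¬L ≤ F₃ with hP
  -- choose a generator of each line
  have hgen : ∀ L : {L // P L}, ∃ v : Fin m → K, v ≠ 0 ∧ Submodule.span K {v} = L.1 := by
    rintro ⟨L, h1, -, -, -⟩
    have hLne : L ≠ ⊥ := by
      intro h; rw [h] at h1; simp at h1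
    obtain ⟨v, hvL, hv0⟩ := L.ne_bot_iff.mp hLne
    refine ⟨v, hv0, ?_⟩
    apply Submodule.eq_of_le_of_finrank_le
    · rw [Submodule.span_le, Set.singleton_subset_iff]; exact hvL
    · rw [h1, finrank_span_singleton hv0]
  choose g hg0 hgspan using hgen
  have hcard1 : Nat.card ({L // P L} × {c : K // c ≠ 0})
      = Nat.card {L // P L} * (Fintype.card K - 1) := by
    rw [Nat.card_prod]
    congr 1
    rw [Nat.card_eq_fintype_card]
    simp only [ne_eq]
    rw [Fintype.card_subtype_compl, Fintype.card_subtype_eq]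
  rw [← hcard1]
  have hmemL : ∀ L : {L // P L}, g L ∈ L.1 := fun L => by
    rw [← hgspan L]; exact Submodule.mem_span_singleton_self _
  apply Nat.card_eq_of_bijective (fun p : {L // P L} × {c : K // c ≠ 0} =>
    (⟨p.2.1 • g p.1,
      Submodule.smul_mem _ _ (p.1.2.2.2.1 (hmemL p.1)),
      by
        intro hmem
        apply p.1.2.2.2.2
        rw [← hgspan p.1, Submodule.span_le, Set.singleton_subset_iff]
        have h := Submodule.smul_mem F₃ (p.2.1)⁻¹ hmem
        rwa [smul_smul, inv_mul_cancel₀ p.2.2, one_smul] at h,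
      p.1.2.2.1 _ (Submodule.smul_mem _ _ (hmemL p.1))⟩ :
      {v : Fin m → K // v ∈ F₄ ∧ v ∉ F₃ ∧ formJ v v = 0}))
  constructor
  · rintro ⟨L, c⟩ ⟨L', c'⟩ h
    have hv : c.1 • g L = c'.1 • g L' := congrArg Subtype.val h
    have hLL' : L = L' := by
      apply Subtype.ext
      rw [← hgspan L, ← hgspan L',
        ← Submodule.span_singleton_smul_eq (IsUnit.mk0 _ c.2) (g L),
        ← Submodule.span_singleton_smul_eq (IsUnit.mk0 _ c'.2) (g L'), hv]
    subst hLL'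
    have hcc : c = c' := Subtype.ext (smul_left_injective K (hg0 L) hv)
    rw [hcc]
  · rintro ⟨v, hv4, hv3, hvQ⟩
    have hv0 : v ≠ 0 := fun h => hv3 (h ▸ h03)
    have hPL : P (Submodule.span K {v}) := by
      refine ⟨finrank_span_singleton hv0, ?_, ?_, ?_⟩
      · intro x hx
        obtain ⟨c, rfl⟩ := Submodule.mem_span_singleton.mp hx
        rw [formJ_smul_left, formJ_smul_right, hvQ]; ring
      · rw [Submodule.span_le, Set.singleton_subset_iff]; exact hv4
      · intro hle
        exact hv3 (hle (Submodule.mem_span_singleton_self v))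
    have hvmem : v ∈ Submodule.span K {g ⟨_, hPL⟩} := by
      rw [hgspan ⟨_, hPL⟩]; exact Submodule.mem_span_singleton_self v
    obtain ⟨c, hc⟩ := Submodule.mem_span_singleton.mp hvmem
    have hc0 : c ≠ 0 := by
      rintro rfl; rw [zero_smul] at hc; exact hv0 hc.symm
    exact ⟨⟨⟨_, hPL⟩, ⟨c, hc0⟩⟩, Subtype.ext hc⟩



/-- Let `F₁ ⊆ F₂ ⊆ F₃ = F₂^⊥ ⊆ F₄ = F₁^⊥` be a 2-step isotropic flag in `F_q^{2r}`
(`q` odd, `F₂` isotropic) with dimension increments `a₁, a₂, a₃, a₄`. Then the number of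
isotropic lines `L` with `L ⊆ F₄` and `L ⊄ F₃` equals
`q^{a₁+a₂+a₃-1} (q^{a₄} - 1)/(q - 1)`. -/
theorem card_isotropic_lines_Z4 (K : Type*) [Field K] [Fintype K]
    (hodd : Odd (ringChar K)) (r : ℕ)
    (F₁ F₂ F₃ F₄ : Submodule K (Fin (2 * r) → K))
    (h12 : F₁ ≤ F₂)
    (hiso : ∀ x ∈ F₂, ∀ y ∈ F₂, formJ x y = 0)
    (h3 : (F₃ : Set (Fin (2 * r) → K)) = {x | ∀ y ∈ F₂, formJ x y = 0})
    (h4 : (F₄ : Set (Fin (2 * r) → K)) = {x | ∀ y ∈ F₁, formJ x y = 0})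
    (a₁ a₂ a₃ a₄ : ℕ)
    (ha₁ : Module.finrank K F₁ = a₁)
    (ha₂ : Module.finrank K F₂ = a₁ + a₂)
    (ha₃ : Module.finrank K F₃ = a₁ + a₂ + a₃)
    (ha₄ : Module.finrank K F₄ = a₁ + a₂ + a₃ + a₄) :
    Nat.card {L : Submodule K (Fin (2 * r) → K) //
        Module.finrank K L = 1 ∧ (∀ x ∈ L, formJ x x = 0) ∧ L ≤ F₄ ∧ ¬L ≤ F₃}
      = Fintype.card K ^ (a₁ + a₂ + a₃ - 1) *
          ((Fintype.card K ^ a₄ - 1) / (Fintype.card K - 1)) := by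
  classical
  set q := Fintype.card K with hq
  have hq2 : 1 < q := Fintype.one_lt_card
  have mem3 : ∀ x, x ∈ F₃ ↔ ∀ y ∈ F₂, formJ x y = 0 := fun x => by
    exact Set.ext_iff.mp h3 x
  have mem4 : ∀ x, x ∈ F₄ ↔ ∀ y ∈ F₁, formJ x y = 0 := fun x => by
    exact Set.ext_iff.mp h4 x
  have htwo : (2 : K) ≠ 0 := by
    intro h
    have h2 : ringChar K ∣ 2 := by
      have := (CharP.cast_eq_zero_iff K (ringChar K) 2).mp (by exact_mod_cast h)
      exact this
    rcases (Nat.dvd_prime Nat.prime_two).mp h2 with h1 | h1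
    · have h10 : (1 : K) = 0 := by
        have := (CharP.cast_eq_zero_iff K (ringChar K) 1).mpr (by rw [h1])
        simpa using this
      exact one_ne_zero h10
    · rw [h1] at hodd
      rw [Nat.odd_iff] at hodd
      omega
  have h23 : F₂ ≤ F₃ := fun x hx => (mem3 x).2 (fun y hy => hiso x hx y hy)
  have h34 : F₃ ≤ F₄ := fun x hx => (mem4 x).2 (fun y hy => (mem3 x).1 hx y (h12 hy))
  set F₃' : Submodule K F₄ := F₃.comap F₄.subtype with hF₃'
  have hfinQ : Finite (F₄ ⧸ F₃') := Finite.of_surjective _ (Submodule.mkQ_surjective F₃')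
  have : Fintype (F₄ ⧸ F₃') := Fintype.ofFinite _
  have hF3card : Nat.card F₃ = q ^ (a₁ + a₂ + a₃) := by
    rw [Nat.card_eq_fintype_card, Module.card_eq_pow_finrank (K := K), ha₃]
  -- each nonzero fiber has q ^ (a₁+a₂+a₃-1) isotropic vectors
  have fibcount : ∀ c : F₄ ⧸ F₃', c ≠ 0 →
      Nat.card {v : F₄ // F₃'.mkQ v = c ∧ formJ (v : Fin (2*r) → K) (v : Fin (2*r) → K) = 0}
        = q ^ (a₁ + a₂ + a₃ - 1) := by
    intro c hc
    obtain ⟨v₀, hv₀⟩ := Submodule.mkQ_surjective F₃' c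
    have hv₀3 : (v₀ : Fin (2*r) → K) ∉ F₃ := by
      intro h
      exact hc (hv₀ ▸ (Submodule.Quotient.mk_eq_zero F₃').mpr h)
    obtain ⟨u, hu2, hvu⟩ : ∃ u ∈ F₂, formJ (v₀ : Fin (2*r) → K) u ≠ 0 := by
      by_contra hno
      push_neg at hno
      exact hv₀3 ((mem3 _).2 hno)
    have huF : u ∈ F₃ := h23 hu2
    have hu3 : ∀ w ∈ F₃, formJ w u = 0 := fun w hw => (mem3 w).1 hw u hu2
    have huu : formJ u u = 0 := hiso u hu2 u hu2
    have hmain := fiber_card htwo F₃ (v₀ : Fin (2*r) → K) u huF hu3 huu hvu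
    have hcongr :
        Nat.card {v : F₄ // F₃'.mkQ v = c ∧ formJ (v : Fin (2*r) → K) (v : Fin (2*r) → K) = 0}
        = Nat.card {w : F₃ // formJ ((v₀ : Fin (2*r) → K) + (w : Fin (2*r) → K))
            ((v₀ : Fin (2*r) → K) + (w : Fin (2*r) → K)) = 0} := by
      apply Nat.card_congr
      refine ⟨fun x => ⟨⟨(x.1 : Fin (2*r) → K) - (v₀ : Fin (2*r) → K), by
          have h0 : F₃'.mkQ (x.1 - v₀) = 0 := by
            rw [map_sub, x.2.1, hv₀, sub_self]
          have hm : x.1 - v₀ ∈ F₃' := by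
            rwa [Submodule.mkQ_apply, Submodule.Quotient.mk_eq_zero] at h0
          exact Submodule.mem_comap.mp hm⟩, by
          have hco : (v₀ : Fin (2*r) → K) + ((x.1 : Fin (2*r) → K) - (v₀ : Fin (2*r) → K))
              = (x.1 : Fin (2*r) → K) := by abel
          rw [hco]
          exact x.2.2⟩,
        fun w => ⟨v₀ + ⟨(w : Fin (2*r) → K), h34 w.1.2⟩, by
          have hm : (⟨(w : Fin (2*r) → K), h34 w.1.2⟩ : F₄) ∈ F₃' :=
            Submodule.mem_comap.mpr w.1.2
          rw [map_add, hv₀, Submodule.mkQ_apply, (Submodule.Quotient.mk_eq_zero F₃').mpr hm,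
            add_zero], by simpa using w.2⟩, ?_, ?_⟩
      · intro x
        apply Subtype.ext
        apply Subtype.ext
        push_cast
        abel
      · intro w
        apply Subtype.ext
        apply Subtype.ext
        push_cast
        abel
    rw [hcongr]
    -- now use hmain : card * q = card F₃ = q ^ (a₁+a₂+a₃)
    have hu0 : u ≠ 0 := by
      intro h
      apply hvu
      rw [h]
      simp [formJ]
    have hd3 : 1 ≤ a₁ + a₂ + a₃ := by
      rw [← ha₃]
      have : Nontrivial F₃ := ⟨⟨⟨u, huF⟩, 0, by simp [hu0]⟩⟩
      exact Module.finrank_pos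
    rw [hF3card] at hmain
    have hpow : q ^ (a₁ + a₂ + a₃) = q ^ (a₁ + a₂ + a₃ - 1) * q := by
      rw [← pow_succ]
      congr 1
      omega
    rw [hpow] at hmain
    exact Nat.eq_of_mul_eq_mul_right (by omega) hmain
  -- finrank of quotient
  have hQ' : Module.finrank K (F₄ ⧸ F₃') = a₄ := by
    have h1 := Submodule.finrank_quotient_add_finrank F₃'
    have h2 : Module.finrank K F₃' = a₁ + a₂ + a₃ := by
      rw [LinearEquiv.finrank_eq (Submodule.comapSubtypeEquivOfLe h34), ha₃]
    rw [h2, ha₄] at h1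
    omega
  have hQcard : Fintype.card (F₄ ⧸ F₃') = q ^ a₄ := by
    rw [Module.card_eq_pow_finrank (K := K), hQ']
  -- total count of isotropic vectors in F₄ \ F₃
  have hT : Nat.card {v : Fin (2*r) → K // v ∈ F₄ ∧ v ∉ F₃ ∧ formJ v v = 0}
      = (q ^ a₄ - 1) * q ^ (a₁ + a₂ + a₃ - 1) := by
    have e1 : {v : Fin (2*r) → K // v ∈ F₄ ∧ v ∉ F₃ ∧ formJ v v = 0}
        ≃ {x : F₄ // F₃'.mkQ x ≠ 0 ∧ formJ (x : Fin (2*r) → K) (x : Fin (2*r) → K) = 0} := by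
      refine ⟨fun v => ⟨⟨v.1, v.2.1⟩, by
          intro h
          apply v.2.2.1
          have hm : (⟨v.1, v.2.1⟩ : F₄) ∈ F₃' := by
            rwa [Submodule.mkQ_apply, Submodule.Quotient.mk_eq_zero] at h
          exact Submodule.mem_comap.mp hm, v.2.2.2⟩,
        fun x => ⟨(x.1 : Fin (2*r) → K), x.1.2, by
          intro h
          apply x.2.1
          rw [Submodule.mkQ_apply, Submodule.Quotient.mk_eq_zero]
          exact Submodule.mem_comap.mpr h, x.2.2⟩, fun v => rfl, fun x => rfl⟩
    rw [Nat.card_congr e1]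
    set A := {x : F₄ // F₃'.mkQ x ≠ 0 ∧ formJ (x : Fin (2*r) → K) (x : Fin (2*r) → K) = 0}
      with hA
    set f : A → {c : F₄ ⧸ F₃' // c ≠ 0} := fun x => ⟨F₃'.mkQ x.1, x.2.1⟩ with hf
    rw [Nat.card_congr (Equiv.sigmaFiberEquiv f).symm]
    rw [Nat.card_eq_fintype_card, Fintype.card_sigma]
    have hfibeq : ∀ c : {c : F₄ ⧸ F₃' // c ≠ 0},
        Fintype.card {x : A // f x = c} = q ^ (a₁ + a₂ + a₃ - 1) := by
      intro c
      rw [← Nat.card_eq_fintype_card, ← fibcount c.1 c.2]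
      apply Nat.card_congr
      refine ⟨fun x => ⟨x.1.1, by
          have hx := congrArg Subtype.val x.2
          simpa [hf] using hx, x.1.2.2⟩,
        fun v => ⟨⟨v.1, by rw [v.2.1]; exact c.2, v.2.2⟩, Subtype.ext v.2.1⟩,
        fun x => by
          apply Subtype.ext
          apply Subtype.ext
          rfl,
        fun v => rfl⟩
    rw [Finset.sum_congr rfl (fun c _ => hfibeq c), Finset.sum_const, Finset.card_univ,
      smul_eq_mul]
    congr 1
    rw [Fintype.card_subtype_compl, Fintype.card_subtype_eq, hQcard]
  -- conclude
  have hL := lines_mul K F₃ F₄ (Submodule.zero_mem F₃)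
  rw [hT] at hL
  have hdvd : (q - 1) ∣ (q ^ a₄ - 1) := by
    simpa using Nat.sub_dvd_pow_sub_pow q 1 a₄
  apply Nat.eq_of_mul_eq_mul_right (show 0 < q - 1 by omega)
  rw [hL, mul_assoc, Nat.div_mul_cancel hdvd, mul_comm]
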